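/- A k-linear map φ : [J_A]_{(1,1)} → [S/J_A]_{(1,1)} extends to an S-module homomorphism J_A → S/J_A if and only if x_j φ(x_i y_k) = x_i φ(x_j y_k) whenever (i,k),(j,k) ∈ O(A) and y_h φ(x_i y_k) = y_k φ(x_i y_h) whenever (i,h),(i,k) ∈ O(A). (This uses that J_A is generated in degree (1,1) and has Castelnuovo–Mumford regularity at most 2, so its first syzygies are the Koszul-type relations among adjacent edges.) -/

import Mathlib

open MvPolynomial

/-- The monomial ideal generated by `x_a y_b` for `(a,b)` in a set `O ⊆ [m] × [n]`. -/
noncomputable def jA (k : Type*) [Field k] (m n : ℕ) (O : Set (Fin m × Fin n)) :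
    Ideal (MvPolynomial (Fin m ⊕ Fin n) k) :=
  Ideal.span {p | ∃ v ∈ O, p = X (Sum.inl v.1) * X (Sum.inr v.2)}

/-- The degree-`(1,1)` part of `J_A`: the `k`-span of its monomial generators. -/
noncomputable def vSpan (k : Type*) [Field k] (m n : ℕ) (O : Set (Fin m × Fin n)) :
    Submodule k (MvPolynomial (Fin m ⊕ Fin n) k) :=
  Submodule.span k {p | ∃ v ∈ O, p = X (Sum.inl v.1) * X (Sum.inr v.2)}

namespace Stmt13Aux

variable {m n : ℕ}

noncomputable def d (v : Fin m × Fin n) : (Fin m ⊕ Fin n) →₀ ℕ :=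
  Finsupp.single (Sum.inl v.1) 1 + Finsupp.single (Sum.inr v.2) 1

lemma d_le_iff (v : Fin m × Fin n) (μ : (Fin m ⊕ Fin n) →₀ ℕ) :
    d v ≤ μ ↔ 1 ≤ μ (Sum.inl v.1) ∧ 1 ≤ μ (Sum.inr v.2) := by
  constructor
  · intro h
    constructor
    · have := Finsupp.le_def.mp h (Sum.inl v.1)
      simpa [d, Finsupp.single_apply] using this
    · have := Finsupp.le_def.mp h (Sum.inr v.2)
      simpa [d, Finsupp.single_apply] using this
  · rintro ⟨h1, h2⟩
    rw [Finsupp.le_def]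
    intro s
    rcases s with a | b
    · by_cases ha : a = v.1
      · subst ha; simpa [d, Finsupp.single_apply] using h1
      · simp [d, Finsupp.single_apply, Ne.symm ha]
    · by_cases hb : b = v.2
      · subst hb; simpa [d, Finsupp.single_apply] using h2
      · simp [d, Finsupp.single_apply, Ne.symm hb]

variable {k : Type*} [Field k]

lemma gen_eq (v : Fin m × Fin n) :
    (X (Sum.inl v.1) * X (Sum.inr v.2) : MvPolynomial (Fin m ⊕ Fin n) k) =
      monomial (d v) 1 := by
  rw [X, X, monomial_mul, d, one_mul]

lemma mem_jA_iff {O : Set (Fin m × Fin n)} {f : MvPolynomial (Fin m ⊕ Fin n) k} :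
    f ∈ jA k m n O ↔ ∀ μ ∈ f.support, ∃ v ∈ O, d v ≤ μ := by
  have : {p : MvPolynomial (Fin m ⊕ Fin n) k | ∃ v ∈ O, p = X (Sum.inl v.1) * X (Sum.inr v.2)}
      = (fun s => monomial s (1 : k)) '' (d '' O) := by
    ext p
    constructor
    · rintro ⟨v, hv, rfl⟩
      exact ⟨d v, ⟨v, hv, rfl⟩, (gen_eq v).symm⟩
    · rintro ⟨s, ⟨v, hv, rfl⟩, rfl⟩
      exact ⟨v, hv, (gen_eq v).symm⟩
  rw [jA, this, mem_ideal_span_monomial_image]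
  constructor
  · intro h μ hμ
    obtain ⟨s, ⟨v, hv, rfl⟩, hle⟩ := h μ hμ
    exact ⟨v, hv, hle⟩
  · intro h μ hμ
    obtain ⟨v, hv, hle⟩ := h μ hμ
    exact ⟨d v, ⟨v, hv, rfl⟩, hle⟩

variable {O : Set (Fin m × Fin n)}
  (φ : ↥(vSpan k m n O) →ₗ[k] (MvPolynomial (Fin m ⊕ Fin n) k ⧸ jA k m n O))

/-- step with shared y-variable -/
lemma stepA
    (h1 : ∀ (i j : Fin m) (kk : Fin n) (hik : (i, kk) ∈ O) (hjk : (j, kk) ∈ O),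
        (X (Sum.inl j) : MvPolynomial (Fin m ⊕ Fin n) k) •
          φ ⟨X (Sum.inl i) * X (Sum.inr kk), Submodule.subset_span ⟨(i, kk), hik, rfl⟩⟩ =
        (X (Sum.inl i) : MvPolynomial (Fin m ⊕ Fin n) k) •
          φ ⟨X (Sum.inl j) * X (Sum.inr kk), Submodule.subset_span ⟨(j, kk), hjk, rfl⟩⟩)
    (i j : Fin m) (c : Fin n) (hic : (i, c) ∈ O) (hjc : (j, c) ∈ O)
    (μ : (Fin m ⊕ Fin n) →₀ ℕ) (hi : d (i, c) ≤ μ) (hj : d (j, c) ≤ μ) :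
    monomial (μ - d (i, c)) (1:k) •
        φ ⟨X (Sum.inl i) * X (Sum.inr c), Submodule.subset_span ⟨(i, c), hic, rfl⟩⟩ =
    monomial (μ - d (j, c)) (1:k) •
        φ ⟨X (Sum.inl j) * X (Sum.inr c), Submodule.subset_span ⟨(j, c), hjc, rfl⟩⟩ := by
  by_cases hij : i = j
  · subst hij; rfl
  set L : (Fin m ⊕ Fin n) →₀ ℕ := d (i, c) + Finsupp.single (Sum.inl j) 1 with hL
  have hL2 : L = d (j, c) + Finsupp.single (Sum.inl i) 1 := by
    simp only [hL, d]
    abel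
  have hLμ : L ≤ μ := by
    rw [Finsupp.le_def]
    intro s
    by_cases hs : s = Sum.inl j
    · subst hs
      have h1' := ((d_le_iff _ μ).mp hj).1
      have : L (Sum.inl j) = 1 := by
        simp [hL, d, Finsupp.single_apply, hij]
      rw [this]; exact h1'
    · have : L s = d (i, c) s := by
        simp [hL, Finsupp.single_apply, Ne.symm hs, hs]
      rw [this]; exact Finsupp.le_def.mp hi s
  have e1 : μ - d (i, c) = (μ - L) + Finsupp.single (Sum.inl j) 1 := by
    have t1 : μ - L + (L - d (i, c)) = μ - d (i, c) :=
      tsub_add_tsub_cancel hLμ (by rw [hL]; exact le_add_of_nonneg_right zero_le)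
    rw [← t1, hL, add_tsub_cancel_left]
  have e2 : μ - d (j, c) = (μ - L) + Finsupp.single (Sum.inl i) 1 := by
    have t1 : μ - L + (L - d (j, c)) = μ - d (j, c) :=
      tsub_add_tsub_cancel hLμ (by rw [hL2]; exact le_add_of_nonneg_right zero_le)
    rw [← t1, hL2, add_tsub_cancel_left]
  rw [e1, e2]
  have hx : ∀ (s : Fin m ⊕ Fin n) (ν : (Fin m ⊕ Fin n) →₀ ℕ),
      (monomial (ν + Finsupp.single s 1) (1:k)) = monomial ν 1 * X s := by
    intro s ν; rw [X, monomial_mul, one_mul]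
  rw [hx, hx, mul_smul, mul_smul, h1 i j c hic hjc]
/-- step with shared x-variable -/
lemma stepB
    (h2 : ∀ (i : Fin m) (hh kk : Fin n) (hih : (i, hh) ∈ O) (hik : (i, kk) ∈ O),
        (X (Sum.inr hh) : MvPolynomial (Fin m ⊕ Fin n) k) •
          φ ⟨X (Sum.inl i) * X (Sum.inr kk), Submodule.subset_span ⟨(i, kk), hik, rfl⟩⟩ =
        (X (Sum.inr kk) : MvPolynomial (Fin m ⊕ Fin n) k) •
          φ ⟨X (Sum.inl i) * X (Sum.inr hh), Submodule.subset_span ⟨(i, hh), hih, rfl⟩⟩)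
    (i : Fin m) (c c' : Fin n) (hic : (i, c) ∈ O) (hic' : (i, c') ∈ O)
    (μ : (Fin m ⊕ Fin n) →₀ ℕ) (hi : d (i, c) ≤ μ) (hj : d (i, c') ≤ μ) :
    monomial (μ - d (i, c)) (1:k) •
        φ ⟨X (Sum.inl i) * X (Sum.inr c), Submodule.subset_span ⟨(i, c), hic, rfl⟩⟩ =
    monomial (μ - d (i, c')) (1:k) •
        φ ⟨X (Sum.inl i) * X (Sum.inr c'), Submodule.subset_span ⟨(i, c'), hic', rfl⟩⟩ := by
  by_cases hcc : c = c'
  · subst hcc; rfl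
  set L : (Fin m ⊕ Fin n) →₀ ℕ := d (i, c) + Finsupp.single (Sum.inr c') 1 with hL
  have hL2 : L = d (i, c') + Finsupp.single (Sum.inr c) 1 := by
    simp only [hL, d]
    abel
  have hLμ : L ≤ μ := by
    rw [Finsupp.le_def]
    intro s
    by_cases hs : s = Sum.inr c'
    · subst hs
      have h1' := ((d_le_iff _ μ).mp hj).2
      have : L (Sum.inr c') = 1 := by
        simp [hL, d, Finsupp.single_apply, hcc]
      rw [this]; exact h1'
    · have : L s = d (i, c) s := by
        simp [hL, Finsupp.single_apply, Ne.symm hs, hs]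
      rw [this]; exact Finsupp.le_def.mp hi s
  have e1 : μ - d (i, c) = (μ - L) + Finsupp.single (Sum.inr c') 1 := by
    have t1 : μ - L + (L - d (i, c)) = μ - d (i, c) :=
      tsub_add_tsub_cancel hLμ (by rw [hL]; exact le_add_of_nonneg_right zero_le)
    rw [← t1, hL, add_tsub_cancel_left]
  have e2 : μ - d (i, c') = (μ - L) + Finsupp.single (Sum.inr c) 1 := by
    have t1 : μ - L + (L - d (i, c')) = μ - d (i, c') :=
      tsub_add_tsub_cancel hLμ (by rw [hL2]; exact le_add_of_nonneg_right zero_le)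
    rw [← t1, hL2, add_tsub_cancel_left]
  rw [e1, e2]
  have hx : ∀ (s : Fin m ⊕ Fin n) (ν : (Fin m ⊕ Fin n) →₀ ℕ),
      (monomial (ν + Finsupp.single s 1) (1:k)) = monomial ν 1 * X s := by
    intro s ν; rw [X, monomial_mul, one_mul]
  rw [hx, hx, mul_smul, mul_smul, h2 i c' c hic' hic]

lemma indep
    (hdown : ∀ u v : Fin m × Fin n, u ≤ v → v ∈ O → u ∈ O)
    (h1 : ∀ (i j : Fin m) (kk : Fin n) (hik : (i, kk) ∈ O) (hjk : (j, kk) ∈ O),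
        (X (Sum.inl j) : MvPolynomial (Fin m ⊕ Fin n) k) •
          φ ⟨X (Sum.inl i) * X (Sum.inr kk), Submodule.subset_span ⟨(i, kk), hik, rfl⟩⟩ =
        (X (Sum.inl i) : MvPolynomial (Fin m ⊕ Fin n) k) •
          φ ⟨X (Sum.inl j) * X (Sum.inr kk), Submodule.subset_span ⟨(j, kk), hjk, rfl⟩⟩)
    (h2 : ∀ (i : Fin m) (hh kk : Fin n) (hih : (i, hh) ∈ O) (hik : (i, kk) ∈ O),
        (X (Sum.inr hh) : MvPolynomial (Fin m ⊕ Fin n) k) •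
          φ ⟨X (Sum.inl i) * X (Sum.inr kk), Submodule.subset_span ⟨(i, kk), hik, rfl⟩⟩ =
        (X (Sum.inr kk) : MvPolynomial (Fin m ⊕ Fin n) k) •
          φ ⟨X (Sum.inl i) * X (Sum.inr hh), Submodule.subset_span ⟨(i, hh), hih, rfl⟩⟩)
    (v w : Fin m × Fin n) (hv : v ∈ O) (hw : w ∈ O)
    (μ : (Fin m ⊕ Fin n) →₀ ℕ) (hvμ : d v ≤ μ) (hwμ : d w ≤ μ) :
    monomial (μ - d v) (1:k) •
        φ ⟨X (Sum.inl v.1) * X (Sum.inr v.2), Submodule.subset_span ⟨v, hv, rfl⟩⟩ =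
    monomial (μ - d w) (1:k) •
        φ ⟨X (Sum.inl w.1) * X (Sum.inr w.2), Submodule.subset_span ⟨w, hw, rfl⟩⟩ := by
  obtain ⟨i, c⟩ := v
  obtain ⟨j, c'⟩ := w
  rcases le_total c c' with hcc | hcc
  · -- middle vertex (j, c)
    have hjc : (j, c) ∈ O := hdown (j, c) (j, c') ⟨le_refl j, hcc⟩ hw
    have hjcμ : d (j, c) ≤ μ := by
      rw [d_le_iff]
      exact ⟨((d_le_iff _ μ).mp hwμ).1, ((d_le_iff _ μ).mp hvμ).2⟩
    exact (stepA φ h1 i j c hv hjc μ hvμ hjcμ).trans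
      (stepB φ h2 j c c' hjc hw μ hjcμ hwμ)
  · -- middle vertex (i, c')
    have hic' : (i, c') ∈ O := hdown (i, c') (i, c) ⟨le_refl i, hcc⟩ hv
    have hic'μ : d (i, c') ≤ μ := by
      rw [d_le_iff]
      exact ⟨((d_le_iff _ μ).mp hvμ).1, ((d_le_iff _ μ).mp hwμ).2⟩
    exact (stepB φ h2 i c c' hv hic' μ hvμ hic'μ).trans
      (stepA φ h1 i j c' hic' hw μ hic'μ hwμ)
open Classical in
noncomputable def val (O : Set (Fin m × Fin n))
    (φ : ↥(vSpan k m n O) →ₗ[k] (MvPolynomial (Fin m ⊕ Fin n) k ⧸ jA k m n O))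
    (μ : (Fin m ⊕ Fin n) →₀ ℕ) : MvPolynomial (Fin m ⊕ Fin n) k ⧸ jA k m n O :=
  if h : ∃ v, v ∈ O ∧ d v ≤ μ then
    monomial (μ - d h.choose) (1:k) •
      φ ⟨X (Sum.inl h.choose.1) * X (Sum.inr h.choose.2),
         Submodule.subset_span ⟨h.choose, h.choose_spec.1, rfl⟩⟩
  else 0

def Hdown (O : Set (Fin m × Fin n)) : Prop := ∀ u v : Fin m × Fin n, u ≤ v → v ∈ O → u ∈ O

def Hyp1 : Prop := ∀ (i j : Fin m) (kk : Fin n) (hik : (i, kk) ∈ O) (hjk : (j, kk) ∈ O),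
      (X (Sum.inl j) : MvPolynomial (Fin m ⊕ Fin n) k) •
        φ ⟨X (Sum.inl i) * X (Sum.inr kk), Submodule.subset_span ⟨(i, kk), hik, rfl⟩⟩ =
      (X (Sum.inl i) : MvPolynomial (Fin m ⊕ Fin n) k) •
        φ ⟨X (Sum.inl j) * X (Sum.inr kk), Submodule.subset_span ⟨(j, kk), hjk, rfl⟩⟩

def Hyp2 : Prop := ∀ (i : Fin m) (hh kk : Fin n) (hih : (i, hh) ∈ O) (hik : (i, kk) ∈ O),
      (X (Sum.inr hh) : MvPolynomial (Fin m ⊕ Fin n) k) •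
        φ ⟨X (Sum.inl i) * X (Sum.inr kk), Submodule.subset_span ⟨(i, kk), hik, rfl⟩⟩ =
      (X (Sum.inr kk) : MvPolynomial (Fin m ⊕ Fin n) k) •
        φ ⟨X (Sum.inl i) * X (Sum.inr hh), Submodule.subset_span ⟨(i, hh), hih, rfl⟩⟩

lemma val_eq (hdown : Hdown O) (h1 : Hyp1 φ) (h2 : Hyp2 φ) (μ : (Fin m ⊕ Fin n) →₀ ℕ) (v : Fin m × Fin n) (hv : v ∈ O) (hle : d v ≤ μ) :
    val O φ μ = monomial (μ - d v) (1:k) •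
      φ ⟨X (Sum.inl v.1) * X (Sum.inr v.2), Submodule.subset_span ⟨v, hv, rfl⟩⟩ := by
  have h0 : ∃ u, u ∈ O ∧ d u ≤ μ := ⟨v, hv, hle⟩
  classical
  rw [val, dif_pos h0]
  exact indep φ hdown h1 h2 h0.choose v h0.choose_spec.1 hv μ h0.choose_spec.2 hle

noncomputable def Phi0 : MvPolynomial (Fin m ⊕ Fin n) k →ₗ[k]
    (MvPolynomial (Fin m ⊕ Fin n) k ⧸ jA k m n O) :=
  (basisMonomials (Fin m ⊕ Fin n) k).constr k (val O φ)

lemma Phi0_monomial (μ : (Fin m ⊕ Fin n) →₀ ℕ) (c : k) :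
    Phi0 φ (monomial μ c) = c • val O φ μ := by
  have : (monomial μ c : MvPolynomial (Fin m ⊕ Fin n) k) = c • monomial μ 1 := by
    rw [smul_monomial, smul_eq_mul, mul_one]
  rw [this, map_smul]
  congr 1
  have hb : (monomial μ (1:k) : MvPolynomial (Fin m ⊕ Fin n) k)
      = basisMonomials (Fin m ⊕ Fin n) k μ := by rw [coe_basisMonomials]
  rw [hb, Phi0, Module.Basis.constr_basis]

lemma core (hdown : Hdown O) (h1 : Hyp1 φ) (h2 : Hyp2 φ) (ν : (Fin m ⊕ Fin n) →₀ ℕ) (hν : ∃ v ∈ O, d v ≤ ν)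
    (μ : (Fin m ⊕ Fin n) →₀ ℕ) (c c' : k) :
    Phi0 φ (monomial μ c * monomial ν c') =
      (monomial μ c : MvPolynomial (Fin m ⊕ Fin n) k) • Phi0 φ (monomial ν c') := by
  obtain ⟨v, hv, hle⟩ := hν
  rw [monomial_mul, Phi0_monomial, Phi0_monomial]
  rw [val_eq φ hdown h1 h2 (μ + ν) v hv (le_trans hle (le_add_self))]
  rw [val_eq φ hdown h1 h2 ν v hv hle]
  have e : μ + ν - d v = μ + (ν - d v) := add_tsub_assoc_of_le hle μ
  rw [e]
  have e2 : (monomial (μ + (ν - d v)) (1:k) : MvPolynomial (Fin m ⊕ Fin n) k)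
      = monomial μ 1 * monomial (ν - d v) 1 := by rw [monomial_mul, one_mul]
  have e3 : (monomial μ c : MvPolynomial (Fin m ⊕ Fin n) k) = c • monomial μ 1 := by
    rw [smul_monomial, smul_eq_mul, mul_one]
  rw [e2, e3, mul_smul, smul_assoc, mul_smul, smul_comm c']

lemma Phi0_mul (hdown : Hdown O) (h1 : Hyp1 φ) (h2 : Hyp2 φ) (p f : MvPolynomial (Fin m ⊕ Fin n) k)
    (hf : ∀ μ ∈ f.support, ∃ v ∈ O, d v ≤ μ) :
    Phi0 φ (p * f) = p • Phi0 φ f := by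
  have hmono : ∀ (ν : (Fin m ⊕ Fin n) →₀ ℕ) (c : k), (∃ v ∈ O, d v ≤ ν) →
      Phi0 φ (p * monomial ν c) = p • Phi0 φ (monomial ν c) := by
    intro ν c hν
    conv_lhs => rw [p.as_sum]
    conv_rhs => rw [p.as_sum]
    rw [Finset.sum_mul, map_sum, Finset.sum_smul]
    exact Finset.sum_congr rfl fun μ _ => core φ hdown h1 h2 ν hν μ _ c
  conv_lhs => rw [f.as_sum]
  conv_rhs => rw [f.as_sum]
  rw [Finset.mul_sum, map_sum, map_sum, Finset.smul_sum]
  exact Finset.sum_congr rfl fun μ hμ => hmono μ _ (hf μ hμ)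
lemma Phi0_gen (hdown : Hdown O) (h1 : Hyp1 φ) (h2 : Hyp2 φ)
    (v : Fin m × Fin n) (hv : v ∈ O) :
    Phi0 φ (X (Sum.inl v.1) * X (Sum.inr v.2)) =
      φ ⟨X (Sum.inl v.1) * X (Sum.inr v.2), Submodule.subset_span ⟨v, hv, rfl⟩⟩ := by
  conv_lhs => rw [gen_eq]
  rw [Phi0_monomial, one_smul, val_eq φ hdown h1 h2 (d v) v hv le_rfl, tsub_self]
  rw [monomial_zero', C_1, one_smul]

end Stmt13Aux

open Stmt13Aux in
/-- A `k`-linear map `φ : [J_A]_{(1,1)} → S/J_A` extends to an `S`-module homomorphism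
`J_A → S/J_A` if and only if `x_j φ(x_i y_k) = x_i φ(x_j y_k)` whenever
`(i,k), (j,k) ∈ O(A)`, and `y_h φ(x_i y_k) = y_k φ(x_i y_h)` whenever
`(i,h), (i,k) ∈ O(A)`. -/
theorem stmt13 {k : Type*} [Field k] {m n : ℕ}
    (A : Set (Fin m × Fin n)) (hA : IsAntichain (· ≤ ·) A)
    (O : Set (Fin m × Fin n)) (hO : O = {v | ∃ w ∈ A, v ≤ w})
    (φ : ↥(vSpan k m n O) →ₗ[k] (MvPolynomial (Fin m ⊕ Fin n) k ⧸ jA k m n O)) :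
    (∃ Φ : ↥(jA k m n O) →ₗ[MvPolynomial (Fin m ⊕ Fin n) k]
        (MvPolynomial (Fin m ⊕ Fin n) k ⧸ jA k m n O),
      ∀ (v : Fin m × Fin n) (hv : v ∈ O),
        Φ ⟨X (Sum.inl v.1) * X (Sum.inr v.2), Ideal.subset_span ⟨v, hv, rfl⟩⟩ =
        φ ⟨X (Sum.inl v.1) * X (Sum.inr v.2), Submodule.subset_span ⟨v, hv, rfl⟩⟩) ↔
    ((∀ (i j : Fin m) (kk : Fin n) (hik : (i, kk) ∈ O) (hjk : (j, kk) ∈ O),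
        (X (Sum.inl j) : MvPolynomial (Fin m ⊕ Fin n) k) •
          φ ⟨X (Sum.inl i) * X (Sum.inr kk), Submodule.subset_span ⟨(i, kk), hik, rfl⟩⟩ =
        (X (Sum.inl i) : MvPolynomial (Fin m ⊕ Fin n) k) •
          φ ⟨X (Sum.inl j) * X (Sum.inr kk), Submodule.subset_span ⟨(j, kk), hjk, rfl⟩⟩) ∧
     (∀ (i : Fin m) (hh kk : Fin n) (hih : (i, hh) ∈ O) (hik : (i, kk) ∈ O),
        (X (Sum.inr hh) : MvPolynomial (Fin m ⊕ Fin n) k) •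
          φ ⟨X (Sum.inl i) * X (Sum.inr kk), Submodule.subset_span ⟨(i, kk), hik, rfl⟩⟩ =
        (X (Sum.inr kk) : MvPolynomial (Fin m ⊕ Fin n) k) •
          φ ⟨X (Sum.inl i) * X (Sum.inr hh), Submodule.subset_span ⟨(i, hh), hih, rfl⟩⟩)) := by
  constructor
  · rintro ⟨Φ, hΦ⟩
    constructor
    · intro i j kk hik hjk
      rw [← hΦ (i, kk) hik, ← hΦ (j, kk) hjk, ← map_smul, ← map_smul]
      congr 1
      apply Subtype.ext
      simp only [SetLike.val_smul, smul_eq_mul]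
      ring
    · intro i hh kk hih hik
      rw [← hΦ (i, kk) hik, ← hΦ (i, hh) hih, ← map_smul, ← map_smul]
      congr 1
      apply Subtype.ext
      simp only [SetLike.val_smul, smul_eq_mul]
      ring
  · rintro ⟨h1, h2⟩
    have hdown : Hdown O := by
      subst hO
      rintro u v huv ⟨w, hw, hvw⟩
      exact ⟨w, hw, huv.trans hvw⟩
    refine ⟨{ toFun := fun x => Phi0 φ x.1,
              map_add' := fun x y => by simp [map_add],
              map_smul' := fun p x => by
                simp only [RingHom.id_apply, SetLike.val_smul, smul_eq_mul]
                exact Phi0_mul φ hdown h1 h2 p x.1 (mem_jA_iff.mp x.2) }, ?_⟩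
    intro v hv
    simp only [LinearMap.coe_mk, AddHom.coe_mk]
    exact Phi0_gen φ hdown h1 h2 v hv
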